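/- For all finite-dimensional Hilbert spaces H_A, H_B and every positive integer M, the set C^{EA}_M of joint input-output maps realizable by entanglement-assisted codes, namely C^{EA}_M := { ζ = (E ⊗ D)(· ⊗ |ψ⟩⟨ψ|_{K'K}) : K', K finite-dimensional Hilbert spaces with H_{K'} = H_K, |ψ⟩ a pure state on H_{K'}⊗H_K, E a CPTP map from (M-dimensional classical message system)⊗(operators on H_{K'}) to operators on H_A, D a CPTP map from (operators on H_B)⊗(operators on H_K) to the M-dimensional classical message system }, is a convex subset of the space of linear maps from (M-dimensional classical system)⊗(operators on H_B) to (operators on H_A)⊗(M-dimensional classical system). -/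

import Mathlib

open scoped Kronecker ComplexOrder
open Matrix Filter

noncomputable section

namespace FQAVC

attribute [local instance] Classical.propDecidable

variable {I J K L E X : Type*}

/-- A density operator (state) on the finite-dimensional Hilbert space with basis `I`. -/
def IsState [Fintype I] (ρ : Matrix I I ℂ) : Prop :=
  ρ.PosSemidef ∧ ρ.trace = 1

/-- A pure (rank-one) operator `|v⟩⟨v|`. -/
def IsPure (ρ : Matrix I I ℂ) : Prop :=
  ∃ v : I → ℂ, ρ = Matrix.vecMulVec v (star v)

/-- The Choi matrix of a map on matrices. -/
def choi [Fintype I] [DecidableEq I] (f : Matrix I I ℂ → Matrix J J ℂ) :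
    Matrix (I × J) (I × J) ℂ :=
  Matrix.of fun p q => f (Matrix.single p.1 q.1 1) p.2 q.2

/-- Completely positive trace-preserving linear maps (quantum channels). -/
structure CPTP (I J : Type*) [Fintype I] [DecidableEq I] [Fintype J] : Type _ where
  toLin : Matrix I I ℂ →ₗ[ℂ] Matrix J J ℂ
  cp : (choi (⇑toLin)).PosSemidef
  tp : ∀ M : Matrix I I ℂ, (toLin M).trace = M.trace

/-- `f ⊗ id` acting on the first tensor factor. -/
def tensorFst [Fintype I] [DecidableEq I] (f : Matrix I I ℂ → Matrix J J ℂ)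
    (ρ : Matrix (I × K) (I × K) ℂ) : Matrix (J × K) (J × K) ℂ :=
  Matrix.of fun p q =>
    ∑ i, ∑ i', f (Matrix.single i i' 1) p.1 q.1 * ρ (i, p.2) (i', q.2)

/-- `id ⊗ f` acting on the second tensor factor. -/
def idTensor [Fintype I] [DecidableEq I] (f : Matrix I I ℂ → Matrix J J ℂ)
    (ρ : Matrix (K × I) (K × I) ℂ) : Matrix (K × J) (K × J) ℂ :=
  Matrix.of fun p q =>
    ∑ i, ∑ i', f (Matrix.single i i' 1) p.2 q.2 * ρ (p.1, i) (q.1, i')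

/-- The channel `N(· ⊗ σ_E)` induced by fixing the jammer state `σ`. -/
def induced (N : Matrix (I × E) (I × E) ℂ → Matrix J J ℂ) (σ : Matrix E E ℂ) :
    Matrix I I ℂ → Matrix J J ℂ :=
  fun ρ => N (ρ ⊗ₖ σ)

/-- `n`-fold Kronecker (tensor) power of a matrix. -/
def kronPow (n : ℕ) (M : Matrix I I ℂ) : Matrix (Fin n → I) (Fin n → I) ℂ :=
  Matrix.of fun p q => ∏ ℓ, M (p ℓ) (q ℓ)

/-- `n`-fold tensor power of a (linear) map on matrices. -/
def tpow [Fintype I] [DecidableEq I] (n : ℕ) (f : Matrix I I ℂ → Matrix J J ℂ) :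
    Matrix (Fin n → I) (Fin n → I) ℂ → Matrix (Fin n → J) (Fin n → J) ℂ :=
  fun ρ => Matrix.of fun j j' => ∑ i : Fin n → I, ∑ i' : Fin n → I,
    (∏ ℓ, f (Matrix.single (i ℓ) (i' ℓ) 1) (j ℓ) (j' ℓ)) * ρ i i'

/-- The `n`-fold tensor power of a channel with jammer interface, presented as a channel
whose sender input is `Aⁿ` and whose jammer input is `Eⁿ`. -/
def tpowChan [Fintype I] [DecidableEq I] [Fintype E] [DecidableEq E] (n : ℕ)
    (N : Matrix (I × E) (I × E) ℂ → Matrix J J ℂ) :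
    Matrix ((Fin n → I) × (Fin n → E)) ((Fin n → I) × (Fin n → E)) ℂ →
      Matrix (Fin n → J) (Fin n → J) ℂ :=
  fun ρ => tpow n N
    (Matrix.reindex (Equiv.arrowProdEquivProdArrow (Fin n) (fun _ => I) (fun _ => E)).symm
      (Equiv.arrowProdEquivProdArrow (Fin n) (fun _ => I) (fun _ => E)).symm ρ)

/-- POVM with `M` outcomes. -/
def IsPOVM [Fintype J] [DecidableEq J] {M : ℕ} (D : Fin M → Matrix J J ℂ) : Prop :=
  (∀ m, (D m).PosSemidef) ∧ ∑ m, D m = 1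

/-- A shared-randomness-assisted code of size `M` for channels from (operators on) `I`
to (operators on) `J`: shared randomness `s`, encoding states `enc s m`, decoder POVMs. -/
structure SRCode (I J : Type*) [Fintype I] [Fintype J] [DecidableEq J] (M : ℕ) where
  k : ℕ
  hk : 0 < k
  p : Fin k → ℝ
  p_nonneg : ∀ s, 0 ≤ p s
  p_sum : ∑ s, p s = 1
  enc : Fin k → Fin M → Matrix I I ℂ
  enc_state : ∀ s m, IsState (enc s m)
  dec : Fin k → Fin M → Matrix J J ℂ
  dec_povm : ∀ s, IsPOVM (dec s)

/-- Average error of a shared-randomness-assisted code over the channel `NN`. -/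
def SRCode.err [Fintype I] [Fintype J] [DecidableEq J] {M : ℕ} (c : SRCode I J M)
    (NN : Matrix I I ℂ → Matrix J J ℂ) : ℝ :=
  1 - (1 / (M : ℝ)) * ∑ m, ∑ s, c.p s * ((c.dec s m * NN (c.enc s m)).trace).re

/-- An entanglement-assisted code of size `M`: a shared pure entangled state `φ` on
`K' ⊗ K`, encoder CPTP maps `enc m : K' → A`, and a decoder POVM on `B ⊗ K`. -/
structure EACode (I J : Type*) [Fintype I] [DecidableEq I] [Fintype J] [DecidableEq J]
    (M : ℕ) where
  dK : ℕ
  φ : Matrix (Fin dK × Fin dK) (Fin dK × Fin dK) ℂ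
  φ_state : IsState φ
  φ_pure : IsPure φ
  enc : Fin M → CPTP (Fin dK) I
  dec : Fin M → Matrix (J × Fin dK) (J × Fin dK) ℂ
  dec_povm : IsPOVM dec

/-- Average error of an entanglement-assisted code over the channel `NN`. -/
def EACode.err [Fintype I] [DecidableEq I] [Fintype J] [DecidableEq J] {M : ℕ}
    (c : EACode I J M) (NN : Matrix I I ℂ → Matrix J J ℂ) : ℝ :=
  1 - (1 / (M : ℝ)) *
    ∑ m, ((c.dec m * tensorFst NN (tensorFst (⇑(c.enc m).toLin) c.φ)).trace).re

/-- Worst-case (over jammer states) average error of an SR code. -/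
def worstErrSR [Fintype I] [Fintype J] [DecidableEq J] [Fintype E] {M : ℕ}
    (c : SRCode I J M) (N : Matrix (I × E) (I × E) ℂ → Matrix J J ℂ) : ℝ :=
  sSup {x : ℝ | ∃ σ : Matrix E E ℂ, IsState σ ∧ x = c.err (induced N σ)}

/-- Worst-case (over jammer states) average error of an EA code. -/
def worstErrEA [Fintype I] [DecidableEq I] [Fintype J] [DecidableEq J] [Fintype E] {M : ℕ}
    (c : EACode I J M) (N : Matrix (I × E) (I × E) ℂ → Matrix J J ℂ) : ℝ :=
  sSup {x : ℝ | ∃ σ : Matrix E E ℂ, IsState σ ∧ x = c.err (induced N σ)}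

/-- Largest SR code size with average error at most `ε` for a fixed channel (in `ℕ∞`). -/
def MSRmax [Fintype I] [Fintype J] [DecidableEq J] (ε : ℝ)
    (NN : Matrix I I ℂ → Matrix J J ℂ) : ℕ∞ :=
  sSup ((fun m : ℕ => (m : ℕ∞)) '' {m : ℕ | ∃ c : SRCode I J m, c.err NN ≤ ε})

/-- Largest SR code size with average error at most `ε` against every jammer state (in `ℕ∞`). -/
def MSRforall [Fintype I] [Fintype J] [DecidableEq J] [Fintype E] (ε : ℝ)
    (N : Matrix (I × E) (I × E) ℂ → Matrix J J ℂ) : ℕ∞ :=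
  sSup ((fun m : ℕ => (m : ℕ∞)) ''
    {m : ℕ | ∃ c : SRCode I J m, ∀ σ : Matrix E E ℂ, IsState σ → c.err (induced N σ) ≤ ε})

/-- Largest EA code size with average error at most `ε` for a fixed channel (in `ℕ∞`). -/
def MEAmax [Fintype I] [DecidableEq I] [Fintype J] [DecidableEq J] (ε : ℝ)
    (NN : Matrix I I ℂ → Matrix J J ℂ) : ℕ∞ :=
  sSup ((fun m : ℕ => (m : ℕ∞)) '' {m : ℕ | ∃ c : EACode I J m, c.err NN ≤ ε})

/-- Largest EA code size with average error at most `ε` against every jammer state (in `ℕ∞`). -/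
def MEAforall [Fintype I] [DecidableEq I] [Fintype J] [DecidableEq J] [Fintype E] (ε : ℝ)
    (N : Matrix (I × E) (I × E) ℂ → Matrix J J ℂ) : ℕ∞ :=
  sSup ((fun m : ℕ => (m : ℕ∞)) ''
    {m : ℕ | ∃ c : EACode I J m, ∀ σ : Matrix E E ℂ, IsState σ → c.err (induced N σ) ≤ ε})

/-- Largest SR code size with error at most `ε` against every jammer state (as a natural number). -/
def MSRforallNat [Fintype I] [Fintype J] [DecidableEq J] [Fintype E] (ε : ℝ)
    (N : Matrix (I × E) (I × E) ℂ → Matrix J J ℂ) : ℕ :=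
  sSup {m : ℕ | ∃ c : SRCode I J m, ∀ σ : Matrix E E ℂ, IsState σ → c.err (induced N σ) ≤ ε}

/-- Largest EA code size with error at most `ε` against every jammer state (as a natural number). -/
def MEAforallNat [Fintype I] [DecidableEq I] [Fintype J] [DecidableEq J] [Fintype E] (ε : ℝ)
    (N : Matrix (I × E) (I × E) ℂ → Matrix J J ℂ) : ℕ :=
  sSup {m : ℕ | ∃ c : EACode I J m, ∀ σ : Matrix E E ℂ, IsState σ → c.err (induced N σ) ≤ ε}

/-- Largest classical-input SR code size (encoders map messages to classical, i.e. diagonal,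
states) with error at most `ε` against every jammer state. -/
def MSRforallCQNat [Fintype X] [Fintype J] [DecidableEq J] [Fintype E] (ε : ℝ)
    (N : Matrix (X × E) (X × E) ℂ → Matrix J J ℂ) : ℕ :=
  sSup {m : ℕ | ∃ c : SRCode X J m, (∀ s mm, (c.enc s mm).IsDiag) ∧
    ∀ σ : Matrix E E ℂ, IsState σ → c.err (induced N σ) ≤ ε}

/-- Minimal average error among SR codes of size `M` for a fixed channel. -/
def errSRmin [Fintype I] [Fintype J] [DecidableEq J] (M : ℕ)
    (NN : Matrix I I ℂ → Matrix J J ℂ) : ℝ :=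
  sInf {e : ℝ | ∃ c : SRCode I J M, e = c.err NN}

/-- Minimal worst-case average error among SR codes of size `M` against all jammer states. -/
def errSRminForall [Fintype I] [Fintype J] [DecidableEq J] [Fintype E] (M : ℕ)
    (N : Matrix (I × E) (I × E) ℂ → Matrix J J ℂ) : ℝ :=
  sInf {e : ℝ | ∃ c : SRCode I J M, e = worstErrSR c N}

/-- Minimal average error among EA codes of size `M` for a fixed channel. -/
def errEAmin [Fintype I] [DecidableEq I] [Fintype J] [DecidableEq J] (M : ℕ)
    (NN : Matrix I I ℂ → Matrix J J ℂ) : ℝ :=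
  sInf {e : ℝ | ∃ c : EACode I J M, e = c.err NN}

/-- Minimal worst-case average error among EA codes of size `M` against all jammer states. -/
def errEAminForall [Fintype I] [DecidableEq I] [Fintype J] [DecidableEq J] [Fintype E] (M : ℕ)
    (N : Matrix (I × E) (I × E) ℂ → Matrix J J ℂ) : ℝ :=
  sInf {e : ℝ | ∃ c : EACode I J M, e = worstErrEA c N}

/-- Von Neumann entropy (base 2) of a matrix via its eigenvalues (junk value `0` if
not Hermitian). -/
def vN [Fintype I] [DecidableEq I] (ρ : Matrix I I ℂ) : ℝ :=
  if h : ρ.IsHermitian then -∑ i, h.eigenvalues i * Real.logb 2 (h.eigenvalues i) else 0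

/-- Partial trace over the second tensor factor. -/
def ptraceSnd [Fintype K] (ρ : Matrix (I × K) (I × K) ℂ) : Matrix I I ℂ :=
  Matrix.of fun i i' => ∑ k, ρ (i, k) (i', k)

/-- Partial trace over the first tensor factor. -/
def ptraceFst [Fintype I] (ρ : Matrix (I × K) (I × K) ℂ) : Matrix K K ℂ :=
  Matrix.of fun k k' => ∑ i, ρ (i, k) (i, k')

/-- Quantum mutual information `I(A:B) = S(A) + S(B) − S(AB)` of a bipartite state. -/
def MI [Fintype I] [DecidableEq I] [Fintype K] [DecidableEq K]
    (ρ : Matrix (I × K) (I × K) ℂ) : ℝ :=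
  vN (ptraceSnd ρ) + vN (ptraceFst ρ) - vN ρ

/-- Coherent information `I_c(A⟩B) = S(B) − S(AB)` of a bipartite state. -/
def cohInfo [Fintype I] [DecidableEq I] [Fintype K] [DecidableEq K]
    (ρ : Matrix (I × K) (I × K) ℂ) : ℝ :=
  vN (ptraceFst ρ) - vN ρ

/-- Positive semidefinite square root (junk value `0` if not PSD). -/
def matSqrt [Fintype I] [DecidableEq I] (ρ : Matrix I I ℂ) : Matrix I I ℂ :=
  if h : ρ.PosSemidef then
    (h.1.eigenvectorUnitary : Matrix I I ℂ) *
      Matrix.diagonal (fun i => ((Real.sqrt (h.1.eigenvalues i) : ℝ) : ℂ)) *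
      (star h.1.eigenvectorUnitary : Matrix I I ℂ)
  else 0

/-- Canonical purification `|ρ⟩⟨ρ|` of a state `ρ`, with the purifying system first. -/
def purification [Fintype I] [DecidableEq I] (ρ : Matrix I I ℂ) :
    Matrix (I × I) (I × I) ℂ :=
  Matrix.of fun p q => matSqrt ρ p.1 p.2 * star (matSqrt ρ q.1 q.2)

/-- The output state `(id_{A'} ⊗ N)(|ρ⟩⟨ρ|_{A'A} ⊗ σ_E)`. -/
def outState [Fintype I] [DecidableEq I] [Fintype E] (N : Matrix (I × E) (I × E) ℂ → Matrix J J ℂ)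
    (ρ : Matrix I I ℂ) (σ : Matrix E E ℂ) : Matrix (I × J) (I × J) ℂ :=
  idTensor (induced N σ) (purification ρ)

/-- The adversarial mutual information `I_{adv.E}(N) = sup_ρ inf_σ I(A':B)`. -/
def IadvE [Fintype I] [DecidableEq I] [Fintype E] [Fintype J] [DecidableEq J]
    (N : Matrix (I × E) (I × E) ℂ → Matrix J J ℂ) : ℝ :=
  ⨆ ρ : {ρ : Matrix I I ℂ // IsState ρ}, ⨅ σ : {σ : Matrix E E ℂ // IsState σ},
    MI (outState N ρ.1 σ.1)

/-- Matrix logarithm (base 2) of a Hermitian matrix via the spectral theorem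
(junk value `0` if not Hermitian; zero eigenvalues give `log 0 = 0`). -/
def matLog [Fintype I] [DecidableEq I] (A : Matrix I I ℂ) : Matrix I I ℂ :=
  if h : A.IsHermitian then
    (h.eigenvectorUnitary : Matrix I I ℂ) *
      Matrix.diagonal (fun i => (Real.logb 2 (h.eigenvalues i) : ℂ)) *
      (star h.eigenvectorUnitary : Matrix I I ℂ)
  else 0

/-- Quantum relative entropy (base 2), `+∞` if the support condition fails. -/
def relEnt [Fintype I] [DecidableEq I] (ρ σ : Matrix I I ℂ) : EReal :=
  if ∀ v : I → ℂ, σ *ᵥ v = 0 → ρ *ᵥ v = 0 then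
    (((ρ * (matLog ρ - matLog σ)).trace).re : EReal)
  else ⊤

/-- Hypothesis-testing divergence `D_h^ε(ρ‖σ)` (base 2). -/
def Dh [Fintype I] [DecidableEq I] (ε : ℝ) (ρ σ : Matrix I I ℂ) : ℝ :=
  -Real.logb 2 (sInf {x : ℝ | ∃ T : Matrix I I ℂ, T.PosSemidef ∧ (1 - T).PosSemidef ∧
    1 - ε ≤ ((T * ρ).trace).re ∧ x = ((T * σ).trace).re})

/-- A linear map on matrices given entrywise by coefficients. -/
def ofCoeffs [Fintype I] (f : I → I → J → J → ℂ) :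
    Matrix I I ℂ →ₗ[ℂ] Matrix J J ℂ where
  toFun M := Matrix.of fun j j' => ∑ i, ∑ i', M i i' * f i i' j j'
  map_add' M N := by
    ext j j'
    simp [Matrix.add_apply, add_mul, Finset.sum_add_distrib]
  map_smul' c M := by
    ext j j'
    simp [Matrix.smul_apply, smul_eq_mul, Finset.mul_sum, mul_assoc]

/-- The tensor product `Φ ⊗ Ψ` of two linear maps on matrices. -/
def lmapTensor [Fintype I] [DecidableEq I] [Fintype K] [DecidableEq K]
    (Φ : Matrix I I ℂ →ₗ[ℂ] Matrix J J ℂ) (Ψ : Matrix K K ℂ →ₗ[ℂ] Matrix L L ℂ) :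
    Matrix (I × K) (I × K) ℂ →ₗ[ℂ] Matrix (J × L) (J × L) ℂ :=
  ofCoeffs fun i i' j j' =>
    Φ (Matrix.single i.1 i'.1 1) j.1 j'.1 *
      Ψ (Matrix.single i.2 i'.2 1) j.2 j'.2

/-- Pinching (dephasing) of the first tensor factor. -/
def pinchFst (χ : Matrix (I × K) (I × K) ℂ) : Matrix (I × K) (I × K) ℂ :=
  Matrix.of fun p q => if p.1 = q.1 then χ p q else 0

/-- A CPTP map out of the `M`-dimensional classical message system is classical-input
if it only depends on the diagonal (classical) part of its input. -/
def ClassicalInput [Fintype J] {M : ℕ} (Φ : CPTP (Fin M) J) : Prop :=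
  ∀ χ : Matrix (Fin M) (Fin M) ℂ, Φ.toLin χ = Φ.toLin (Matrix.diagonal fun m => χ m m)

/-- A CPTP map into the `M`-dimensional classical message system is classical-output
if its outputs are diagonal (classical). -/
def ClassicalOutput [Fintype J] [DecidableEq J] {M : ℕ} (Φ : CPTP J (Fin M)) : Prop :=
  ∀ ρ : Matrix J J ℂ, Φ.toLin ρ = Matrix.diagonal fun m => Φ.toLin ρ m m

/-- A CPTP map whose input has a classical first (message) tensor factor. -/
def ClassicalInputFst [Fintype K] [DecidableEq K] [Fintype J] {M : ℕ}
    (Φ : CPTP (Fin M × K) J) : Prop :=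
  ∀ χ : Matrix (Fin M × K) (Fin M × K) ℂ, Φ.toLin χ = Φ.toLin (pinchFst χ)

/-- The maximally entangled state on `Fin d × Fin d`. -/
def maxEnt (d : ℕ) : Matrix (Fin d × Fin d) (Fin d × Fin d) ℂ :=
  Matrix.of fun p q => if p.1 = p.2 ∧ q.1 = q.2 then (1 / (d : ℂ)) else 0

/-- A shared-randomness-assisted quantum code with message dimension `dM`. -/
structure SRQCode (I J : Type*) [Fintype I] [DecidableEq I] [Fintype J] [DecidableEq J]
    (dM : ℕ) where
  k : ℕ
  hk : 0 < k
  p : Fin k → ℝ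
  p_nonneg : ∀ s, 0 ≤ p s
  p_sum : ∑ s, p s = 1
  enc : Fin k → CPTP (Fin dM) I
  dec : Fin k → CPTP J (Fin dM)

/-- Entanglement fidelity of a shared-randomness-assisted quantum code over the channel `NN`. -/
def SRQCode.fid [Fintype I] [DecidableEq I] [Fintype J] [DecidableEq J] {dM : ℕ}
    (c : SRQCode I J dM) (NN : Matrix I I ℂ → Matrix J J ℂ) : ℝ :=
  ((maxEnt dM *
    idTensor (fun ρ => ∑ s, c.p s • ((c.dec s).toLin (NN ((c.enc s).toLin ρ))))
      (maxEnt dM)).trace).re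

/-- Entanglement-assisted classical capacity of the FQAVC associated with `N`. -/
def CEAfqavc [Fintype I] [DecidableEq I] [Fintype E] [DecidableEq E] [Fintype J] [DecidableEq J]
    (N : Matrix (I × E) (I × E) ℂ → Matrix J J ℂ) : ℝ :=
  sSup {r : ℝ | 0 ≤ r ∧
    ∃ codes : (n : ℕ) → EACode (Fin n → I) (Fin n → J) ⌈(2 : ℝ) ^ ((n : ℝ) * r)⌉₊,
      Filter.Tendsto (fun n => worstErrEA (codes n) (tpowChan n N)) Filter.atTop (nhds 0)}

/-- Shared-randomness-assisted classical capacity of the FQAVC associated with `N`. -/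
def CSRfqavc [Fintype I] [DecidableEq I] [Fintype E] [DecidableEq E] [Fintype J] [DecidableEq J]
    (N : Matrix (I × E) (I × E) ℂ → Matrix J J ℂ) : ℝ :=
  sSup {r : ℝ | 0 ≤ r ∧
    ∃ codes : (n : ℕ) → SRCode (Fin n → I) (Fin n → J) ⌈(2 : ℝ) ^ ((n : ℝ) * r)⌉₊,
      Filter.Tendsto (fun n => worstErrSR (codes n) (tpowChan n N)) Filter.atTop (nhds 0)}

/-- Shared-randomness-assisted classical capacity of the classical-quantum FQAVC
associated with `N` (encoders produce classical, i.e. diagonal, states on the input). -/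
def CSRfqavcCQ [Fintype X] [DecidableEq X] [Fintype E] [DecidableEq E] [Fintype J] [DecidableEq J]
    (N : Matrix (X × E) (X × E) ℂ → Matrix J J ℂ) : ℝ :=
  sSup {r : ℝ | 0 ≤ r ∧
    ∃ codes : (n : ℕ) → SRCode (Fin n → X) (Fin n → J) ⌈(2 : ℝ) ^ ((n : ℝ) * r)⌉₊,
      (∀ n s mm, ((codes n).enc s mm).IsDiag) ∧
      Filter.Tendsto (fun n => worstErrSR (codes n) (tpowChan n N)) Filter.atTop (nhds 0)}

/-- Shared-randomness-assisted quantum capacity of the FQAVC associated with `N`. -/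
def QSRfqavc [Fintype I] [DecidableEq I] [Fintype E] [DecidableEq E] [Fintype J] [DecidableEq J]
    (N : Matrix (I × E) (I × E) ℂ → Matrix J J ℂ) : ℝ :=
  sSup {r : ℝ | 0 ≤ r ∧
    ∃ codes : (n : ℕ) → SRQCode (Fin n → I) (Fin n → J) (2 ^ ⌈(n : ℝ) * r⌉₊),
      Filter.Tendsto
        (fun n => sInf {x : ℝ | ∃ σ : Matrix (Fin n → E) (Fin n → E) ℂ, IsState σ ∧
          x = (codes n).fid (induced (tpowChan n N) σ)})
        Filter.atTop (nhds 1)}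

/-- The Holevo quantity of a channel maximized over classical-quantum input ensembles. -/
def holevoCap [Fintype I] [Fintype J] [DecidableEq J]
    (G : Matrix I I ℂ → Matrix J J ℂ) : ℝ :=
  ⨆ dX : ℕ, ⨆ p : {p : Fin dX → ℝ // (∀ x, 0 ≤ p x) ∧ ∑ x, p x = 1},
    ⨆ ρs : {ρs : Fin dX → Matrix I I ℂ // ∀ x, IsState (ρs x)},
      MI (∑ x, p.1 x • (Matrix.single x x (1 : ℂ) ⊗ₖ G (ρs.1 x)))

/-- The cq output state `Σ_x p(x) |x⟩⟨x| ⊗ N(|x⟩⟨x| ⊗ σ)`. -/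
def cqOut [Fintype X] [DecidableEq X] [Fintype E] [Fintype J]
    (N : Matrix (X × E) (X × E) ℂ → Matrix J J ℂ) (p : X → ℝ) (σ : Matrix E E ℂ) :
    Matrix (X × J) (X × J) ℂ :=
  ∑ x, p x • (Matrix.single x x (1 : ℂ) ⊗ₖ N (Matrix.single x x (1 : ℂ) ⊗ₖ σ))


section Aux

variable {A K₀ K J I : Type*}

/-- Pull back a matrix on `A × K` to a matrix on `A × K₀` along `f : K₀ → K`. -/
def pullK (f : K₀ → K) :
    Matrix (A × K) (A × K) ℂ →ₗ[ℂ] Matrix (A × K₀) (A × K₀) ℂ where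
  toFun X := X.submatrix (Prod.map id f) (Prod.map id f)
  map_add' := fun _ _ => rfl
  map_smul' := fun _ _ => rfl

lemma pullK_apply (f : K₀ → K) (X : Matrix (A × K) (A × K) ℂ) (p q : A × K₀) :
    pullK f X p q = X (p.1, f p.2) (q.1, f q.2) := rfl

lemma apply_eq_sum_stdBasis [Fintype I] [DecidableEq I]
    {J : Type*} (g : Matrix I I ℂ →ₗ[ℂ] Matrix J J ℂ) (X : Matrix I I ℂ) (j j' : J) :
    g X j j' = ∑ p, ∑ q, X p q * g (Matrix.single p q 1) j j' := by
  conv_lhs => rw [Matrix.matrix_eq_sum_single X]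
  rw [map_sum]
  rw [Matrix.sum_apply]
  refine Finset.sum_congr rfl fun p _ => ?_
  rw [map_sum, Matrix.sum_apply]
  refine Finset.sum_congr rfl fun q _ => ?_
  have : Matrix.single p q (X p q) = X p q • Matrix.single p q (1:ℂ) := by
    rw [Matrix.smul_single, smul_eq_mul, mul_one]
  rw [this, _root_.map_smul, Matrix.smul_apply, smul_eq_mul]

lemma choi_add [Fintype I] [DecidableEq I] [Fintype J]
    (g h : Matrix I I ℂ →ₗ[ℂ] Matrix J J ℂ) :
    choi (⇑(g + h)) = choi ⇑g + choi ⇑h := by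
  ext p q
  simp [choi]

lemma swap_ite_sum {α β : Type*} [Fintype α] [Fintype β] (c : α → Prop) [DecidablePred c]
    (d : β → Prop) [DecidablePred d] (T : α → β → ℂ) :
    (∑ x, if c x then ∑ y, if d y then T x y else 0 else 0) =
    ∑ y, if d y then ∑ x, if c x then T x y else 0 else 0 := by
  trans (∑ x, ∑ y, if c x then if d y then T x y else 0 else 0)
  · exact Finset.sum_congr rfl fun x _ => by split <;> simp
  rw [Finset.sum_comm]
  refine Finset.sum_congr rfl fun y _ => ?_
  by_cases hd : d y <;> simp [hd]

end Aux
section Aux2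

variable {A K₀ K J : Type*}

lemma choi_comp_pullK_posSemidef [Fintype A] [DecidableEq A] [Fintype K₀] [DecidableEq K₀]
    [Fintype K] [DecidableEq K] [Fintype J] [DecidableEq J]
    (g : Matrix (A × K₀) (A × K₀) ℂ →ₗ[ℂ] Matrix J J ℂ)
    (hg : (choi ⇑g).PosSemidef) (f : K₀ → K) :
    (choi (⇑(g ∘ₗ pullK (A := A) f))).PosSemidef := by
  classical
  set B : Matrix ((A × K₀) × J) ((A × K) × J) ℂ :=
    Matrix.of fun x y => if ((x.1.1, f x.1.2), x.2) = y then 1 else 0 with hB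
  have key : choi (⇑(g ∘ₗ pullK (A := A) f)) = Bᴴ * choi ⇑g * B := by
    ext y y'
    show (g (pullK f (Matrix.single y.1 y'.1 1))) y.2 y'.2 = _
    rw [apply_eq_sum_stdBasis]
    simp only [Matrix.mul_apply, Matrix.conjTranspose_apply, hB, Matrix.of_apply,
      pullK_apply, Matrix.single, choi]
    rw [Fintype.sum_prod_type]
    rw [Fintype.sum_prod_type]
    simp only [apply_ite (star : ℂ → ℂ), star_one, star_zero, ite_mul, mul_ite, one_mul, mul_one,
      zero_mul, mul_zero, Prod.mk.injEq, Prod.ext_iff, ite_and, Fintype.sum_prod_type,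
      Finset.sum_ite_eq, Finset.sum_ite_eq', Finset.mem_univ, if_true,
      Finset.sum_ite_irrel, Finset.sum_const_zero]
    rw [swap_ite_sum]
    refine Finset.sum_congr rfl fun c _ => ?_
    by_cases h2 : y'.1.2 = f c
    · rw [if_pos h2, if_pos h2.symm]
      refine Finset.sum_congr rfl fun c' _ => ?_
      by_cases h1 : y.1.2 = f c'
      · rw [if_pos h1, if_pos h1.symm]
      · rw [if_neg h1, if_neg (fun h => h1 h.symm)]
    · rw [if_neg h2, if_neg (fun h => h2 h.symm)]
  rw [key]
  exact hg.conjTranspose_mul_mul_same B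

end Aux2
section Aux3

variable {A K₀ K : Type*}

lemma trace_pullK_castAdd_add_natAdd [Fintype A] {d₁ d₂ : ℕ}
    (X : Matrix (A × Fin (d₁ + d₂)) (A × Fin (d₁ + d₂)) ℂ) :
    (pullK (A := A) (Fin.castAdd d₂) X).trace + (pullK (A := A) (Fin.natAdd d₁) X).trace
      = X.trace := by
  simp only [Matrix.trace, Matrix.diag, pullK_apply, Fintype.sum_prod_type]
  rw [← Finset.sum_add_distrib]
  exact Finset.sum_congr rfl fun a _ => (Fin.sum_univ_add (fun k => X (a, k) (a, k))).symm

lemma pullK_pinchFst' {B : Type*} (f : K₀ → K) (χ : Matrix (B × K) (B × K) ℂ) :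
    pullK f (pinchFst χ) = pinchFst (pullK f χ) := by
  ext p q
  simp [pinchFst, pullK_apply]

lemma posSemidef_vecMulVec_star {I : Type*} [Fintype I] (v : I → ℂ) :
    (Matrix.vecMulVec v (star v)).PosSemidef := by
  have h : Matrix.vecMulVec v (star v)
      = Matrix.replicateCol (Fin 1) v * (Matrix.replicateCol (Fin 1) v)ᴴ := by
    rw [Matrix.conjTranspose_replicateCol, Matrix.vecMulVec_eq (Fin 1)]
    rfl
  rw [h]
  exact Matrix.posSemidef_self_mul_conjTranspose _

lemma trace_vecMulVec_star {I : Type*} [Fintype I] (v : I → ℂ) :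
    (Matrix.vecMulVec v (star v)).trace = ∑ p, v p * star (v p) := by
  simp [Matrix.trace, Matrix.diag, Matrix.vecMulVec_apply]

end Aux3
section Aux4

/-- Block-mixture of two pure-state vectors with weights `a` and `b`. -/
def mixVec (a b : ℝ) {d₁ d₂ : ℕ} (v₁ : Fin d₁ × Fin d₁ → ℂ) (v₂ : Fin d₂ × Fin d₂ → ℂ) :
    Fin (d₁ + d₂) × Fin (d₁ + d₂) → ℂ := fun p =>
  Fin.addCases (fun c => Fin.addCases (fun c' => (Real.sqrt a : ℂ) * v₁ (c, c'))
      (fun _ => 0) p.2)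
    (fun c => Fin.addCases (fun _ => (0 : ℂ)) (fun c' => (Real.sqrt b : ℂ) * v₂ (c, c')) p.2) p.1

@[simp] lemma mixVec_ll (a b : ℝ) {d₁ d₂ : ℕ} (v₁ : Fin d₁ × Fin d₁ → ℂ)
    (v₂ : Fin d₂ × Fin d₂ → ℂ) (c e : Fin d₁) :
    mixVec a b v₁ v₂ (Fin.castAdd d₂ c, Fin.castAdd d₂ e) = (Real.sqrt a : ℂ) * v₁ (c, e) := by
  simp [mixVec]

@[simp] lemma mixVec_lr (a b : ℝ) {d₁ d₂ : ℕ} (v₁ : Fin d₁ × Fin d₁ → ℂ)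
    (v₂ : Fin d₂ × Fin d₂ → ℂ) (c : Fin d₁) (e : Fin d₂) :
    mixVec a b v₁ v₂ (Fin.castAdd d₂ c, Fin.natAdd d₁ e) = 0 := by
  simp [mixVec]

@[simp] lemma mixVec_rl (a b : ℝ) {d₁ d₂ : ℕ} (v₁ : Fin d₁ × Fin d₁ → ℂ)
    (v₂ : Fin d₂ × Fin d₂ → ℂ) (c : Fin d₂) (e : Fin d₁) :
    mixVec a b v₁ v₂ (Fin.natAdd d₁ c, Fin.castAdd d₂ e) = 0 := by
  simp [mixVec]

@[simp] lemma mixVec_rr (a b : ℝ) {d₁ d₂ : ℕ} (v₁ : Fin d₁ × Fin d₁ → ℂ)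
    (v₂ : Fin d₂ × Fin d₂ → ℂ) (c e : Fin d₂) :
    mixVec a b v₁ v₂ (Fin.natAdd d₁ c, Fin.natAdd d₁ e) = (Real.sqrt b : ℂ) * v₂ (c, e) := by
  simp [mixVec]

lemma isState_mixVec {a b : ℝ} (ha : 0 ≤ a) (hb : 0 ≤ b) (hab : a + b = 1)
    {d₁ d₂ : ℕ} {v₁ : Fin d₁ × Fin d₁ → ℂ} {v₂ : Fin d₂ × Fin d₂ → ℂ}
    (h₁ : ∑ p, v₁ p * star (v₁ p) = 1) (h₂ : ∑ p, v₂ p * star (v₂ p) = 1) :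
    IsState (Matrix.vecMulVec (mixVec a b v₁ v₂) (star (mixVec a b v₁ v₂))) := by
  refine ⟨posSemidef_vecMulVec_star _, ?_⟩
  have hsa : (Real.sqrt a : ℂ) * (Real.sqrt a : ℂ) = (a : ℂ) := by
    rw [← Complex.ofReal_mul, Real.mul_self_sqrt ha]
  have hsb : (Real.sqrt b : ℂ) * (Real.sqrt b : ℂ) = (b : ℂ) := by
    rw [← Complex.ofReal_mul, Real.mul_self_sqrt hb]
  rw [trace_vecMulVec_star, Fintype.sum_prod_type]
  simp only [Fin.sum_univ_add, mixVec_ll, mixVec_lr, mixVec_rl, mixVec_rr,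
    star_zero, mul_zero, zero_mul, Finset.sum_const_zero, add_zero, zero_add,
    star_mul', Complex.star_def, Complex.conj_ofReal]
  have e₁ : ∀ (c e : Fin d₁),
      (Real.sqrt a : ℂ) * v₁ (c, e) * (starRingEnd ℂ) ((Real.sqrt a : ℂ) * v₁ (c, e))
        = (a : ℂ) * (v₁ (c, e) * star (v₁ (c, e))) := by
    intro c e
    rw [_root_.map_mul, Complex.conj_ofReal, ← hsa, Complex.star_def]; ring
  have e₂ : ∀ (c e : Fin d₂),
      (Real.sqrt b : ℂ) * v₂ (c, e) * (starRingEnd ℂ) ((Real.sqrt b : ℂ) * v₂ (c, e))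
        = (b : ℂ) * (v₂ (c, e) * star (v₂ (c, e))) := by
    intro c e
    rw [_root_.map_mul, Complex.conj_ofReal, ← hsb, Complex.star_def]; ring
  rw [Fintype.sum_prod_type] at h₁ h₂
  simp only [e₁, e₂, ← Finset.mul_sum]
  rw [h₁, h₂]
  simp only [mul_one]
  rw [← Complex.ofReal_add, hab, Complex.ofReal_one]

end Aux4
section Aux5

variable {A J : Type*}

/-- Combine two channels with environments `Fin d₁`, `Fin d₂` into a single channel on the
direct-sum environment `Fin (d₁ + d₂)`. -/
def combineCPTP [Fintype A] [DecidableEq A] [Fintype J] [DecidableEq J] {d₁ d₂ : ℕ}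
    (E₁ : CPTP (A × Fin d₁) J) (E₂ : CPTP (A × Fin d₂) J) : CPTP (A × Fin (d₁ + d₂)) J where
  toLin := E₁.toLin ∘ₗ pullK (Fin.castAdd d₂) + E₂.toLin ∘ₗ pullK (Fin.natAdd d₁)
  cp := by
    rw [choi_add]
    exact (choi_comp_pullK_posSemidef _ E₁.cp _).add (choi_comp_pullK_posSemidef _ E₂.cp _)
  tp := fun X => by
    simp only [LinearMap.add_apply, LinearMap.comp_apply, Matrix.trace_add, E₁.tp, E₂.tp]
    exact trace_pullK_castAdd_add_natAdd X

lemma combineCPTP_apply [Fintype A] [DecidableEq A] [Fintype J] [DecidableEq J] {d₁ d₂ : ℕ}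
    (E₁ : CPTP (A × Fin d₁) J) (E₂ : CPTP (A × Fin d₂) J)
    (X : Matrix (A × Fin (d₁ + d₂)) (A × Fin (d₁ + d₂)) ℂ) :
    (combineCPTP E₁ E₂).toLin X
      = E₁.toLin (pullK (Fin.castAdd d₂) X) + E₂.toLin (pullK (Fin.natAdd d₁) X) := rfl

lemma castAdd_injective (d₁ d₂ : ℕ) : Function.Injective (Fin.castAdd (n := d₁) d₂) := by
  intro x y h
  exact Fin.ext (by simpa [Fin.castAdd] using congrArg Fin.val h)

lemma natAdd_injective (d₁ d₂ : ℕ) : Function.Injective (fun i : Fin d₂ => Fin.natAdd d₁ i) := by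
  intro x y h
  have := congrArg Fin.val h
  simp only [Fin.natAdd] at this
  exact Fin.ext (by omega)

lemma castAdd_ne_natAdd {d₁ d₂ : ℕ} (c : Fin d₁) (e : Fin d₂) :
    Fin.castAdd d₂ c ≠ Fin.natAdd d₁ e := by
  intro h
  have := congrArg Fin.val h
  simp only [Fin.castAdd, Fin.natAdd, Fin.castLE] at this
  omega

lemma pullK_stdBasis [DecidableEq A] {K₀ K : Type*} [DecidableEq K₀] [DecidableEq K]
    (f : K₀ → K) (hf : Function.Injective f) (m m' : A) (c c' : K₀) :
    pullK f (Matrix.single (m, f c) (m', f c') (1 : ℂ))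
      = Matrix.single (m, c) (m', c') 1 := by
  ext p q
  simp only [pullK_apply, Matrix.single, Matrix.of_apply, Prod.mk.injEq, Prod.ext_iff]
  simp [hf.eq_iff]

lemma pullK_stdBasis_zero_left [DecidableEq A] {K₀ K : Type*} [DecidableEq K₀] [DecidableEq K]
    (f : K₀ → K) {k : K} (hk : ∀ c, f c ≠ k) (m m' : A) (k' : K) :
    pullK f (Matrix.single (m, k) (m', k') (1 : ℂ)) = 0 := by
  ext p q
  simp only [pullK_apply, Matrix.single, Matrix.of_apply, Prod.mk.injEq,
    Matrix.zero_apply, ite_eq_right_iff]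
  rintro ⟨⟨-, h⟩, -⟩
  exact absurd h.symm (hk p.2)

lemma pullK_stdBasis_zero_right [DecidableEq A] {K₀ K : Type*} [DecidableEq K₀] [DecidableEq K]
    (f : K₀ → K) {k' : K} (hk : ∀ c, f c ≠ k') (m m' : A) (k : K) :
    pullK f (Matrix.single (m, k) (m', k') (1 : ℂ)) = 0 := by
  ext p q
  simp only [pullK_apply, Matrix.single, Matrix.of_apply, Prod.mk.injEq,
    Matrix.zero_apply, ite_eq_right_iff]
  rintro ⟨-, ⟨-, h⟩⟩
  exact absurd h.symm (hk q.2)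

variable [Fintype A] [DecidableEq A] [Fintype J] [DecidableEq J] {d₁ d₂ : ℕ}

@[simp] lemma combine_std_ll (E₁ : CPTP (A × Fin d₁) J) (E₂ : CPTP (A × Fin d₂) J)
    (m m' : A) (c c' : Fin d₁) :
    (combineCPTP E₁ E₂).toLin
        (Matrix.single (m, Fin.castAdd d₂ c) (m', Fin.castAdd d₂ c') 1)
      = E₁.toLin (Matrix.single (m, c) (m', c') 1) := by
  rw [combineCPTP_apply, pullK_stdBasis _ (castAdd_injective d₁ d₂),
    pullK_stdBasis_zero_left (Fin.natAdd d₁) (fun e h => castAdd_ne_natAdd c e h.symm)]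
  simp

@[simp] lemma combine_std_rr (E₁ : CPTP (A × Fin d₁) J) (E₂ : CPTP (A × Fin d₂) J)
    (m m' : A) (c c' : Fin d₂) :
    (combineCPTP E₁ E₂).toLin
        (Matrix.single (m, Fin.natAdd d₁ c) (m', Fin.natAdd d₁ c') 1)
      = E₂.toLin (Matrix.single (m, c) (m', c') 1) := by
  rw [combineCPTP_apply, pullK_stdBasis _ (natAdd_injective d₁ d₂),
    pullK_stdBasis_zero_left (Fin.castAdd d₂) (fun e h => castAdd_ne_natAdd e c h)]
  simp

@[simp] lemma combine_std_lr (E₁ : CPTP (A × Fin d₁) J) (E₂ : CPTP (A × Fin d₂) J)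
    (m m' : A) (c : Fin d₁) (c' : Fin d₂) :
    (combineCPTP E₁ E₂).toLin
        (Matrix.single (m, Fin.castAdd d₂ c) (m', Fin.natAdd d₁ c') 1) = 0 := by
  rw [combineCPTP_apply,
    pullK_stdBasis_zero_right (Fin.castAdd d₂) (fun e h => castAdd_ne_natAdd e c' h),
    pullK_stdBasis_zero_left (Fin.natAdd d₁) (fun e h => castAdd_ne_natAdd c e h.symm)]
  simp

@[simp] lemma combine_std_rl (E₁ : CPTP (A × Fin d₁) J) (E₂ : CPTP (A × Fin d₂) J)
    (m m' : A) (c : Fin d₂) (c' : Fin d₁) :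
    (combineCPTP E₁ E₂).toLin
        (Matrix.single (m, Fin.natAdd d₁ c) (m', Fin.castAdd d₂ c') 1) = 0 := by
  rw [combineCPTP_apply,
    pullK_stdBasis_zero_left (Fin.castAdd d₂) (fun e h => castAdd_ne_natAdd e c h),
    pullK_stdBasis_zero_right (Fin.natAdd d₁) (fun e h => castAdd_ne_natAdd c' e h.symm)]
  simp

end Aux5
section Aux6

variable {J : Type*} {d₁ d₂ M : ℕ}

lemma combine_classicalInputFst [Fintype J] [DecidableEq J]
    (E₁ : CPTP (Fin M × Fin d₁) J) (E₂ : CPTP (Fin M × Fin d₂) J)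
    (h₁ : ClassicalInputFst E₁) (h₂ : ClassicalInputFst E₂) :
    ClassicalInputFst (combineCPTP E₁ E₂) := by
  intro χ
  rw [combineCPTP_apply, combineCPTP_apply, pullK_pinchFst', pullK_pinchFst',
    ← h₁, ← h₂]

lemma combine_classicalOutput [Fintype J] [DecidableEq J]
    (D₁ : CPTP (J × Fin d₁) (Fin M)) (D₂ : CPTP (J × Fin d₂) (Fin M))
    (h₁ : ClassicalOutput D₁) (h₂ : ClassicalOutput D₂) :
    ClassicalOutput (combineCPTP D₁ D₂) := by
  intro ρ
  ext i j
  by_cases h : i = j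
  · subst h; rw [Matrix.diagonal_apply_eq]
  · rw [Matrix.diagonal_apply_ne _ h, combineCPTP_apply, Matrix.add_apply]
    have e1 : D₁.toLin (pullK (Fin.castAdd d₂) ρ) i j = 0 := by
      rw [h₁ (pullK (Fin.castAdd d₂) ρ)]; exact Matrix.diagonal_apply_ne _ h
    have e2 : D₂.toLin (pullK (Fin.natAdd d₁) ρ) i j = 0 := by
      rw [h₂ (pullK (Fin.natAdd d₁) ρ)]; exact Matrix.diagonal_apply_ne _ h
    rw [e1, e2, add_zero]

end Aux6
section Aux7

lemma sqrt_mul_star (a : ℝ) (ha : 0 ≤ a) (x y : ℂ) :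
    ((Real.sqrt a : ℂ) * x) * star ((Real.sqrt a : ℂ) * y) = (a : ℂ) * (x * star y) := by
  have hsa : (Real.sqrt a : ℂ) * (Real.sqrt a : ℂ) = (a : ℂ) := by
    rw [← Complex.ofReal_mul, Real.mul_self_sqrt ha]
  simp only [star_mul', Complex.star_def, Complex.conj_ofReal]
  rw [← hsa]; ring

set_option maxHeartbeats 3000000 in
lemma combine_lmapTensor {dA dB M d₁ d₂ : ℕ} (a b : ℝ) (ha : 0 ≤ a) (hb : 0 ≤ b)
    (v₁ : Fin d₁ × Fin d₁ → ℂ) (v₂ : Fin d₂ × Fin d₂ → ℂ)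
    (E₁ : CPTP (Fin M × Fin d₁) (Fin dA)) (D₁ : CPTP (Fin dB × Fin d₁) (Fin M))
    (E₂ : CPTP (Fin M × Fin d₂) (Fin dA)) (D₂ : CPTP (Fin dB × Fin d₂) (Fin M))
    (χ : Matrix (Fin M × Fin dB) (Fin M × Fin dB) ℂ) :
    lmapTensor (combineCPTP E₁ E₂).toLin (combineCPTP D₁ D₂).toLin
      (Matrix.reindex
        (Equiv.prodProdProdComm (Fin M) (Fin dB) (Fin (d₁ + d₂)) (Fin (d₁ + d₂)))
        (Equiv.prodProdProdComm (Fin M) (Fin dB) (Fin (d₁ + d₂)) (Fin (d₁ + d₂)))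
        (χ ⊗ₖ Matrix.vecMulVec (mixVec a b v₁ v₂) (star (mixVec a b v₁ v₂))))
    = a • lmapTensor E₁.toLin D₁.toLin
        (Matrix.reindex (Equiv.prodProdProdComm (Fin M) (Fin dB) (Fin d₁) (Fin d₁))
          (Equiv.prodProdProdComm (Fin M) (Fin dB) (Fin d₁) (Fin d₁))
          (χ ⊗ₖ Matrix.vecMulVec v₁ (star v₁)))
      + b • lmapTensor E₂.toLin D₂.toLin
        (Matrix.reindex (Equiv.prodProdProdComm (Fin M) (Fin dB) (Fin d₂) (Fin d₂))
          (Equiv.prodProdProdComm (Fin M) (Fin dB) (Fin d₂) (Fin d₂))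
          (χ ⊗ₖ Matrix.vecMulVec v₂ (star v₂))) := by
  ext j j'
  simp only [lmapTensor, ofCoeffs, LinearMap.coe_mk, AddHom.coe_mk, Matrix.of_apply,
    Matrix.add_apply, Matrix.smul_apply, Complex.real_smul,
    Matrix.reindex_apply, Matrix.submatrix_apply, Equiv.prodProdProdComm_symm,
    Equiv.prodProdProdComm_apply, Matrix.kroneckerMap_apply, Matrix.vecMulVec_apply,
    Pi.star_apply, Fintype.sum_prod_type]
  simp only [Fin.sum_univ_add, mixVec_ll, mixVec_lr, mixVec_rl, mixVec_rr,
    combine_std_ll, combine_std_lr, combine_std_rl, combine_std_rr,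
    star_zero, zero_mul, mul_zero, Matrix.zero_apply, Finset.sum_const_zero,
    add_zero, zero_add]
  simp only [sqrt_mul_star a ha, sqrt_mul_star b hb, Finset.mul_sum,
    Finset.sum_add_distrib]
  refine congrArg₂ (· + ·) ?_ ?_ <;>
    · iterate 8 refine Finset.sum_congr rfl fun _ _ => ?_
      ring

end Aux7
/-- The set `C^{EA}_M` of joint input-output maps realizable by
entanglement-assisted codes of size `M` is convex. -/
theorem convex_EA_codes {dA dB : ℕ} (hdA : 0 < dA) (hdB : 0 < dB) (M : ℕ) (hM : 0 < M) :
    Convex ℝ {ζ : Matrix (Fin M × Fin dB) (Fin M × Fin dB) ℂ →ₗ[ℂ]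
        Matrix (Fin dA × Fin M) (Fin dA × Fin M) ℂ |
      ∃ (dK : ℕ) (ψ : Matrix (Fin dK × Fin dK) (Fin dK × Fin dK) ℂ),
        IsState ψ ∧ IsPure ψ ∧
        ∃ (En : CPTP (Fin M × Fin dK) (Fin dA)) (De : CPTP (Fin dB × Fin dK) (Fin M)),
          ClassicalInputFst En ∧ ClassicalOutput De ∧
          ∀ χ, ζ χ = lmapTensor En.toLin De.toLin
            (Matrix.reindex (Equiv.prodProdProdComm (Fin M) (Fin dB) (Fin dK) (Fin dK))
              (Equiv.prodProdProdComm (Fin M) (Fin dB) (Fin dK) (Fin dK)) (χ ⊗ₖ ψ))} := by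
  intro ζ₁ hζ₁ ζ₂ hζ₂ a b ha hb hab
  obtain ⟨d₁, ψ₁, hs₁, hp₁, E₁, D₁, hE₁, hD₁, hm₁⟩ := hζ₁
  obtain ⟨v₁, rfl⟩ := hp₁
  obtain ⟨d₂, ψ₂, hs₂, hp₂, E₂, D₂, hE₂, hD₂, hm₂⟩ := hζ₂
  obtain ⟨v₂, rfl⟩ := hp₂
  refine ⟨d₁ + d₂, Matrix.vecMulVec (mixVec a b v₁ v₂) (star (mixVec a b v₁ v₂)),
    isState_mixVec ha hb hab ?_ ?_, ⟨mixVec a b v₁ v₂, rfl⟩,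
    combineCPTP E₁ E₂, combineCPTP D₁ D₂,
    combine_classicalInputFst _ _ hE₁ hE₂, combine_classicalOutput _ _ hD₁ hD₂, ?_⟩
  · rw [← trace_vecMulVec_star]; exact hs₁.2
  · rw [← trace_vecMulVec_star]; exact hs₂.2
  · intro χ
    rw [LinearMap.add_apply, LinearMap.smul_apply, LinearMap.smul_apply, hm₁ χ, hm₂ χ]
    exact (combine_lmapTensor a b ha hb v₁ v₂ E₁ D₁ E₂ D₂ χ).symm

end FQAVC
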